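/- Let k ≥ 2, φ ∈ (0,1). Then there exists m such that ((1+φ^{2k})/(1+φ²))^{m−2} · (1+φ^{−2})/(1+φ²) < 1; consequently the Condorcet-model Bayesian estimator f_B^2 fails the Condorcet criterion. -/

import Mathlib

/-- for `k ≥ 2` and `φ ∈ (0,1)`, there exists `m` with
`((1+φ^{2k})/(1+φ²))^{m−2} · (1+φ^{−2})/(1+φ²) < 1`
(so the Condorcet-model Bayesian estimator fails the Condorcet criterion). -/
theorem condorcet_fails_condorcet_ratio (k : ℕ) (hk : 2 ≤ k) (φ : ℝ)
    (hφ0 : 0 < φ) (hφ1 : φ < 1) :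
    ∃ m : ℕ, ((1 + φ ^ (2 * k)) / (1 + φ ^ 2)) ^ (m - 2)
        * ((1 + φ ^ (-2 : ℤ)) / (1 + φ ^ 2)) < 1 := by
  set r : ℝ := (1 + φ ^ (2 * k)) / (1 + φ ^ 2) with hr
  set C : ℝ := (1 + φ ^ (-2 : ℤ)) / (1 + φ ^ 2) with hC
  have hden : (0:ℝ) < 1 + φ ^ 2 := by positivity
  have hr0 : 0 ≤ r := by positivity
  have hrlt : r < 1 := by
    rw [hr, div_lt_one hden]
    have : φ ^ (2 * k) < φ ^ 2 := by
      apply pow_lt_pow_right_of_lt_one₀ hφ0 hφ1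
      omega
    linarith
  have hC0 : 0 < C := by
    have : (0:ℝ) < 1 + φ ^ (-2 : ℤ) := by positivity
    positivity
  have h := tendsto_pow_atTop_nhds_zero_of_lt_one hr0 hrlt
  have hev := h.eventually (gt_mem_nhds (show (0:ℝ) < 1 / C by positivity))
  obtain ⟨n, hn⟩ := hev.exists
  refine ⟨n + 2, ?_⟩
  have : r ^ (n + 2 - 2) < 1 / C := by simpa using hn
  calc r ^ (n + 2 - 2) * C < (1 / C) * C := by
        exact mul_lt_mul_of_pos_right this hC0
    _ = 1 := by field_simp
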